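/- Let m, n ∈ ℕ with 2 ≤ m ≤ n and let ρ = |Φ⟩⟨Φ| be a pure m⊗n state (Φ a unit vector in ℂ^m ⊗ ℂ^n). Then the geometric discord satisfies D(ρ) ≤ 1. -/

import Mathlib

open Matrix BigOperators Polynomial
open scoped Kronecker ComplexOrder

noncomputable section

/-- Squared Hilbert–Schmidt norm `‖C‖² = Tr(CᴴC)`. -/
def hsNormSq {d : Type*} [Fintype d] (C : Matrix d d ℂ) : ℝ :=
  (Matrix.trace (Cᴴ * C)).re

/-- Trace norm `‖X‖₁ = Tr √(XᴴX)`. -/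
def traceNorm {d : Type*} [Fintype d] [DecidableEq d] (X : Matrix d d ℂ) : ℝ :=
  (((Matrix.posSemidef_conjTranspose_mul_self X).1.eigenvectorUnitary.1 *
    diagonal (((↑) : ℝ → ℂ) ∘ Real.sqrt ∘ (Matrix.posSemidef_conjTranspose_mul_self X).1.eigenvalues) *
    (star (Matrix.posSemidef_conjTranspose_mul_self X).1.eigenvectorUnitary : Matrix d d ℂ)).trace).re

/-- Partial transpose on the first factor: `ρ^Γ((i,k),(j,l)) = ρ((j,k),(i,l))`. -/
def ptranspose {m n : ℕ} (ρ : Matrix (Fin m × Fin n) (Fin m × Fin n) ℂ) :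
    Matrix (Fin m × Fin n) (Fin m × Fin n) ℂ :=
  Matrix.of fun p q => ρ (q.1, p.2) (p.1, q.2)

/-- Negativity `N(ρ) = (‖ρ^Γ‖₁ - 1)/(m-1)`. -/
def negativity {m n : ℕ} (ρ : Matrix (Fin m × Fin n) (Fin m × Fin n) ℂ) : ℝ :=
  (traceNorm (ptranspose ρ) - 1) / ((m : ℝ) - 1)

/-- `ψ` is an orthonormal basis of `ℂ^m` (an orthonormal family of `m` vectors). -/
def IsONB {m : ℕ} (ψ : Fin m → (Fin m → ℂ)) : Prop :=
  ∀ k l, (∑ i, star (ψ k i) * ψ l i) = if k = l then 1 else 0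

/-- The rank-one projector `|v⟩⟨v|`. -/
def proj {m : ℕ} (v : Fin m → ℂ) : Matrix (Fin m) (Fin m) ℂ :=
  Matrix.vecMulVec v (fun j => star (v j))

/-- The von Neumann measurement map
`Π^A(ρ) = ∑ k, (|ψ_k⟩⟨ψ_k| ⊗ I_n) ρ (|ψ_k⟩⟨ψ_k| ⊗ I_n)`. -/
def piA {m n : ℕ} (ψ : Fin m → (Fin m → ℂ))
    (ρ : Matrix (Fin m × Fin n) (Fin m × Fin n) ℂ) :
    Matrix (Fin m × Fin n) (Fin m × Fin n) ℂ :=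
  ∑ k, (proj (ψ k) ⊗ₖ (1 : Matrix (Fin n) (Fin n) ℂ)) * ρ *
       (proj (ψ k) ⊗ₖ (1 : Matrix (Fin n) (Fin n) ℂ))

/-- Geometric discord
`D(ρ) = (m/(m-1)) · inf over von Neumann measurements of ‖ρ - Π^A(ρ)‖²`. -/
def gd {m n : ℕ} (ρ : Matrix (Fin m × Fin n) (Fin m × Fin n) ℂ) : ℝ :=
  ((m : ℝ) / ((m : ℝ) - 1)) *
    ⨅ ψ : {ψ : Fin m → (Fin m → ℂ) // IsONB ψ}, hsNormSq (ρ - piA ψ.1 ρ)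

/-- An `m ⊗ n` state: positive semidefinite with trace one. -/
def IsState {m n : ℕ} (ρ : Matrix (Fin m × Fin n) (Fin m × Fin n) ℂ) : Prop :=
  ρ.PosSemidef ∧ ρ.trace = 1

/-- Reindex a `6 × 6` matrix by `Fin 2 × Fin 3` with the ordering
`(1,1),(1,2),(1,3),(2,1),(2,2),(2,3)`. -/
def ofM6 (M : Matrix (Fin 6) (Fin 6) ℂ) :
    Matrix (Fin 2 × Fin 3) (Fin 2 × Fin 3) ℂ :=
  Matrix.of fun p q =>
    M ⟨p.1.val * 3 + p.2.val, by have := p.1.isLt; have := p.2.isLt; omega⟩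
      ⟨q.1.val * 3 + q.2.val, by have := q.1.isLt; have := q.2.isLt; omega⟩

/-- The family of states `ρ₁(a,b)`. -/
def rho1 (a b : ℝ) : Matrix (Fin 2 × Fin 3) (Fin 2 × Fin 3) ℂ :=
  ofM6 ((1 / (2 * ((a : ℂ)^2 + (b : ℂ)^2))) •
    !![(a:ℂ)^2, 0, 0, 0, (a:ℂ)*(b:ℂ), 0;
       0, (b:ℂ)^2, 0, 0, 0, (a:ℂ)*(b:ℂ);
       0, 0, 0, 0, 0, 0;
       0, 0, 0, 0, 0, 0;
       (a:ℂ)*(b:ℂ), 0, 0, 0, (b:ℂ)^2, 0;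
       0, (a:ℂ)*(b:ℂ), 0, 0, 0, (a:ℂ)^2])

lemma hsNormSq_eq {d : Type*} [Fintype d] (C : Matrix d d ℂ) :
    hsNormSq C = ∑ p, ∑ q, Complex.normSq (C q p) := by
  unfold hsNormSq Matrix.trace
  simp only [Matrix.diag, Matrix.mul_apply, Matrix.conjTranspose_apply]
  rw [Complex.re_sum]
  refine Finset.sum_congr rfl fun p _ => ?_
  rw [Complex.re_sum]
  refine Finset.sum_congr rfl fun q _ => ?_
  rw [mul_comm, Complex.star_def, Complex.mul_conj]
  simp

lemma hsNormSq_nonneg {d : Type*} [Fintype d] (C : Matrix d d ℂ) :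
    0 ≤ hsNormSq C := by
  rw [hsNormSq_eq]
  exact Finset.sum_nonneg fun p _ => Finset.sum_nonneg fun q _ => Complex.normSq_nonneg _

lemma piA_std {m n : ℕ} (ρ : Matrix (Fin m × Fin n) (Fin m × Fin n) ℂ) :
    piA (fun k i => if i = k then 1 else 0) ρ =
      Matrix.of fun p q => if p.1 = q.1 then ρ p q else 0 := by
  ext ⟨i, a⟩ ⟨j, b⟩
  simp only [piA, Matrix.sum_apply, Matrix.mul_apply, Matrix.kroneckerMap_apply, proj,
    Matrix.vecMulVec_apply, Matrix.one_apply, Fintype.sum_prod_type, Matrix.of_apply,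
    apply_ite (star : ℂ → ℂ), star_one, star_zero, ite_mul, mul_ite, one_mul, mul_one, zero_mul, mul_zero]
  simp [Finset.sum_ite_eq, Finset.sum_ite_eq', eq_comm]
  split_ifs with h
  · rw [h]
  · rfl

theorem stmt4 (m n : ℕ) (hm : 2 ≤ m) (hmn : m ≤ n)
    (Φ : Fin m × Fin n → ℂ) (hΦ : ∑ x, star (Φ x) * Φ x = 1)
    (ρ : Matrix (Fin m × Fin n) (Fin m × Fin n) ℂ)
    (hρ : ρ = Matrix.vecMulVec Φ (fun x => star (Φ x))) :
    gd ρ ≤ 1 := by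
  classical
  have hm1 : (1 : ℝ) ≤ (m : ℝ) - 1 := by
    have : (2 : ℝ) ≤ (m : ℝ) := by exact_mod_cast hm
    linarith
  set e : Fin m → Fin m → ℂ := fun k i => if i = k then 1 else 0 with he
  have honb : IsONB e := by
    intro k l
    simp only [he]
    simp [apply_ite (star : ℂ → ℂ), ite_mul, mul_ite, Finset.sum_ite_eq', eq_comm]
  -- probabilities
  set p : Fin m → ℝ := fun i => ∑ a, Complex.normSq (Φ (i, a)) with hp
  have hpnn : ∀ i, 0 ≤ p i := fun i =>
    Finset.sum_nonneg fun a _ => Complex.normSq_nonneg _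
  have key : ∀ z : ℂ, (star z * z).re = Complex.normSq z := by
    intro z; rw [Complex.star_def, mul_comm, Complex.mul_conj]; simp
  have hpsum : ∑ i, p i = 1 := by
    have h1 := congrArg Complex.re hΦ
    rw [Complex.re_sum] at h1
    simp only [key] at h1
    rw [Fintype.sum_prod_type] at h1
    simpa [hp] using h1
  -- value at standard basis
  have hval : hsNormSq (ρ - piA e ρ) = 1 - ∑ i, p i ^ 2 := by
    rw [hsNormSq_eq]
    have hentry : ∀ q p' : Fin m × Fin n,
        (ρ - piA e ρ) q p' = if q.1 = p'.1 then 0 else Φ q * star (Φ p') := by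
      intro q p'
      rw [piA_std, hρ]
      simp only [Matrix.sub_apply, Matrix.of_apply, Matrix.vecMulVec_apply]
      split_ifs with h
      · simp [Matrix.vecMulVec_apply]
      · simp [Matrix.vecMulVec_apply]
    calc ∑ x, ∑ q, Complex.normSq ((ρ - piA e ρ) q x)
        = ∑ x : Fin m × Fin n, ∑ q : Fin m × Fin n,
            (if q.1 = x.1 then 0 else Complex.normSq (Φ q) * Complex.normSq (Φ x)) := by
          refine Finset.sum_congr rfl fun x _ => Finset.sum_congr rfl fun q _ => ?_
          rw [hentry]
          split_ifs with h
          · simp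
          · rw [Complex.normSq_mul, Complex.star_def, Complex.normSq_conj]
      _ = (∑ x : Fin m × Fin n, ∑ q : Fin m × Fin n,
            Complex.normSq (Φ q) * Complex.normSq (Φ x))
          - ∑ x : Fin m × Fin n, ∑ q : Fin m × Fin n,
            (if q.1 = x.1 then Complex.normSq (Φ q) * Complex.normSq (Φ x) else 0) := by
          rw [← Finset.sum_sub_distrib]
          refine Finset.sum_congr rfl fun x _ => ?_
          rw [← Finset.sum_sub_distrib]
          refine Finset.sum_congr rfl fun q _ => ?_
          split_ifs <;> ring
      _ = 1 - ∑ i, p i ^ 2 := by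
          have htot : ∑ x : Fin m × Fin n, Complex.normSq (Φ x) = 1 := by
            rw [Fintype.sum_prod_type]; exact hpsum
          congr 1
          · calc (∑ x : Fin m × Fin n, ∑ q : Fin m × Fin n,
                Complex.normSq (Φ q) * Complex.normSq (Φ x))
                = ∑ x : Fin m × Fin n, (∑ q : Fin m × Fin n, Complex.normSq (Φ q))
                    * Complex.normSq (Φ x) := by
                  refine Finset.sum_congr rfl fun x _ => ?_
                  rw [Finset.sum_mul]
              _ = 1 := by rw [htot]; simp [htot]
          · rw [Fintype.sum_prod_type]
            refine Finset.sum_congr rfl fun j _ => ?_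
            calc ∑ b, ∑ q : Fin m × Fin n,
                (if q.1 = j then Complex.normSq (Φ q) * Complex.normSq (Φ (j, b)) else 0)
                = ∑ b, ∑ a, Complex.normSq (Φ (j, a)) * Complex.normSq (Φ (j, b)) := by
                  refine Finset.sum_congr rfl fun b _ => ?_
                  rw [Fintype.sum_prod_type, Finset.sum_comm]
                  refine Finset.sum_congr rfl fun a _ => ?_
                  simp
              _ = p j ^ 2 := by
                  simp only [← Finset.sum_mul, ← Finset.mul_sum]
                  simp [hp, sq]
  -- the infimum is bounded by the value at the standard basis
  have hfac : (0 : ℝ) ≤ (m : ℝ) / ((m : ℝ) - 1) := by positivity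
  have hinf : (⨅ ψ : {ψ : Fin m → (Fin m → ℂ) // IsONB ψ}, hsNormSq (ρ - piA ψ.1 ρ))
      ≤ hsNormSq (ρ - piA e ρ) := by
    refine ciInf_le ⟨0, ?_⟩ (⟨e, honb⟩ : {ψ : Fin m → (Fin m → ℂ) // IsONB ψ})
    rintro x ⟨ψ, rfl⟩
    exact hsNormSq_nonneg _
  have hps : (1 : ℝ) / m ≤ ∑ i, p i ^ 2 := by
    have hc := sq_sum_le_card_mul_sum_sq (s := (Finset.univ : Finset (Fin m))) (f := p)
    rw [hpsum] at hc
    simp only [Finset.card_univ, Fintype.card_fin, one_pow] at hc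
    rw [div_le_iff₀ (by linarith : (0:ℝ) < (m:ℝ))]
    calc (1:ℝ) = 1 := rfl
      _ ≤ (m : ℝ) * ∑ i, p i ^ 2 := by exact_mod_cast hc
      _ = (∑ i, p i ^ 2) * m := by ring
  have hmne : ((m : ℝ) - 1) ≠ 0 := by linarith
  have hmn0 : (m : ℝ) ≠ 0 := by linarith
  calc gd ρ ≤ ((m : ℝ) / ((m : ℝ) - 1)) * hsNormSq (ρ - piA e ρ) := by
        rw [gd]; exact mul_le_mul_of_nonneg_left hinf hfac
    _ = ((m : ℝ) / ((m : ℝ) - 1)) * (1 - ∑ i, p i ^ 2) := by rw [hval]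
    _ ≤ ((m : ℝ) / ((m : ℝ) - 1)) * (((m : ℝ) - 1) / m) := by
        refine mul_le_mul_of_nonneg_left ?_ hfac
        have h2 : ((m:ℝ) - 1) / m = 1 - 1 / m := by field_simp
        rw [h2]; linarith
    _ = 1 := by field_simp

end
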